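/- The exponential map exp : d → D, where d = ℂ[[ξ]]ξ d/dξ is the Lie algebra of formal vector fields vanishing at 0 and D = Aut ℂ((ξ)), defined by exp(l)(f(ξ)) = ∑_{k≥0} (1/k!) l^k f(ξ), restricts to a bijection from d₊⁰ = {(αξ + α₁ξ² + ⋯) d/dξ : α ∈ ℝ} onto D₊⁰ = {h : h(ξ) = aξ + a₁ξ² + ⋯, a > 0}. -/

import Mathlib

open PowerSeries

/-- The formal derivative `f'` of a power series `f ∈ ℂ[[ξ]]`. -/
noncomputable def psDeriv (f : PowerSeries ℂ) : PowerSeries ℂ :=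
  PowerSeries.mk fun n => ((n : ℂ) + 1) * PowerSeries.coeff (R := ℂ) (n + 1) f

/-- The action of the formal vector field `l(ξ) d/dξ` on `f ∈ ℂ[[ξ]]`:
`(l(ξ) d/dξ) f = l·f'`. -/
noncomputable def vfAct (l f : PowerSeries ℂ) : PowerSeries ℂ := l * psDeriv f

/-- `exp(l)(f) = ∑_{k≥0} (1/k!) lᵏf` for a formal vector field `l = l(ξ) d/dξ`, computed
coefficientwise as a convergent series in `ℂ`. -/
noncomputable def vfExp (l f : PowerSeries ℂ) : PowerSeries ℂ :=
  PowerSeries.mk fun n =>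
    ∑' k : ℕ, (k.factorial : ℂ)⁻¹ * PowerSeries.coeff (R := ℂ) n ((vfAct l)^[k] f)

/-- `d₊⁰`: vector fields `l(ξ) d/dξ` with `l(ξ) = αξ + α₁ξ² + ⋯`, `α ∈ ℝ`. -/
noncomputable def dPlusZero : Set (PowerSeries ℂ) :=
  {l | PowerSeries.coeff (R := ℂ) 0 l = 0 ∧ ∃ α : ℝ, PowerSeries.coeff (R := ℂ) 1 l = (α : ℂ)}

/-- `D₊⁰`: automorphisms of `ℂ((ξ))`, identified with the power series `h(ξ)` which is the
image of `ξ`, with `h(ξ) = aξ + a₁ξ² + ⋯`, `a > 0` real. -/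
noncomputable def DPlusZero : Set (PowerSeries ℂ) :=
  {h | PowerSeries.coeff (R := ℂ) 0 h = 0 ∧
       ∃ a : ℝ, 0 < a ∧ PowerSeries.coeff (R := ℂ) 1 h = (a : ℂ)}



section Aux
open Finset

lemma coeff_vfAct (l f : PowerSeries ℂ) (p : ℕ) :
    coeff (R := ℂ) p (vfAct l f) = ∑ ij ∈ Finset.HasAntidiagonal.antidiagonal p,
      coeff (R := ℂ) ij.1 l * (((ij.2 : ℂ) + 1) * coeff (R := ℂ) (ij.2 + 1) f) := by
  simp [vfAct, coeff_mul, psDeriv, coeff_mk]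

lemma iter_congr {l l' f f' : PowerSeries ℂ} {n : ℕ}
    (hl0 : coeff (R := ℂ) 0 l = 0)
    (hl : ∀ q ≤ n, coeff (R := ℂ) q l = coeff (R := ℂ) q l')
    (hf : ∀ q ≤ n, coeff (R := ℂ) q f = coeff (R := ℂ) q f') :
    ∀ k, ∀ p ≤ n, coeff (R := ℂ) p ((vfAct l)^[k] f) = coeff (R := ℂ) p ((vfAct l')^[k] f') := by
  have hl0' : coeff (R := ℂ) 0 l' = 0 := by rw [← hl 0 (Nat.zero_le n), hl0]
  intro k
  induction k with
  | zero => simpa using hf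
  | succ k ih =>
    intro p hp
    rw [Function.iterate_succ_apply', Function.iterate_succ_apply', coeff_vfAct, coeff_vfAct]
    refine Finset.sum_congr rfl fun ij hij => ?_
    rw [Finset.HasAntidiagonal.mem_antidiagonal] at hij
    rcases Nat.eq_zero_or_pos ij.1 with h0 | h1
    · rw [h0, hl0, hl0', zero_mul, zero_mul]
    · have hj : ij.2 + 1 ≤ n := by omega
      rw [hl ij.1 (by omega), ih (ij.2 + 1) hj]

lemma iter_bound {l f : PowerSeries ℂ} {n : ℕ} {B C : ℝ}
    (hl0 : coeff (R := ℂ) 0 l = 0)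
    (hB : ∀ q ≤ n, ‖coeff (R := ℂ) q l‖ ≤ B)
    (hC0 : 0 ≤ C)
    (hC : ∀ q ≤ n, ‖coeff (R := ℂ) q f‖ ≤ C) :
    ∀ k, ∀ p ≤ n, ‖coeff (R := ℂ) p ((vfAct l)^[k] f)‖ ≤ (((n : ℝ) + 1) ^ 2 * B) ^ k * C := by
  have hB0 : 0 ≤ B := le_trans (norm_nonneg _) (hB 0 (Nat.zero_le n))
  have hX0 : (0:ℝ) ≤ ((n : ℝ) + 1) ^ 2 * B := by positivity
  intro k
  induction k with
  | zero => intro p hp; simpa using hC p hp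
  | succ k ih =>
    intro p hp
    rw [Function.iterate_succ_apply', coeff_vfAct]
    have key : ∀ ij ∈ Finset.HasAntidiagonal.antidiagonal p,
        ‖coeff (R := ℂ) ij.1 l * (((ij.2 : ℂ) + 1) * coeff (R := ℂ) (ij.2 + 1) ((vfAct l)^[k] f))‖
          ≤ B * (((n : ℝ) + 1) * ((((n : ℝ) + 1) ^ 2 * B) ^ k * C)) := by
      intro ij hij
      rw [Finset.HasAntidiagonal.mem_antidiagonal] at hij
      rcases Nat.eq_zero_or_pos ij.1 with h0 | h1
      · rw [h0, hl0, zero_mul, norm_zero]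
        positivity
      · have hj1 : ij.2 + 1 ≤ n := by omega
        rw [norm_mul, norm_mul]
        have e1 : ‖coeff (R := ℂ) ij.1 l‖ ≤ B := hB ij.1 (by omega)
        have e2 : ‖((ij.2 : ℂ) + 1)‖ ≤ (n : ℝ) + 1 := by
          have : ((ij.2 : ℂ) + 1) = ((ij.2 + 1 : ℕ) : ℂ) := by push_cast; ring
          rw [this, Complex.norm_natCast]
          exact_mod_cast hj1.trans (Nat.le_succ n)
        have e3 : ‖coeff (R := ℂ) (ij.2 + 1) ((vfAct l)^[k] f)‖ ≤ (((n : ℝ) + 1) ^ 2 * B) ^ k * C :=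
          ih (ij.2 + 1) hj1
        have h2 : (0:ℝ) ≤ (n : ℝ) + 1 := by positivity
        exact mul_le_mul e1 (mul_le_mul e2 e3 (norm_nonneg _) h2)
          (mul_nonneg (norm_nonneg _) (norm_nonneg _)) hB0
    calc ‖∑ ij ∈ Finset.HasAntidiagonal.antidiagonal p,
        coeff (R := ℂ) ij.1 l * (((ij.2 : ℂ) + 1) * coeff (R := ℂ) (ij.2 + 1) ((vfAct l)^[k] f))‖
        ≤ ∑ ij ∈ Finset.HasAntidiagonal.antidiagonal p,
          ‖coeff (R := ℂ) ij.1 l * (((ij.2 : ℂ) + 1) * coeff (R := ℂ) (ij.2 + 1) ((vfAct l)^[k] f))‖ :=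
          norm_sum_le _ _
      _ ≤ (Finset.HasAntidiagonal.antidiagonal p).card •
            (B * (((n : ℝ) + 1) * ((((n : ℝ) + 1) ^ 2 * B) ^ k * C))) :=
          Finset.sum_le_card_nsmul _ _ _ key
      _ ≤ (((n : ℝ) + 1) ^ 2 * B) ^ (k + 1) * C := by
          rw [Finset.Nat.card_antidiagonal, nsmul_eq_mul]
          have hcard : ((p : ℝ) + 1) ≤ (n : ℝ) + 1 := by exact_mod_cast Nat.succ_le_succ hp
          have h1 : (0:ℝ) ≤ B * (((n : ℝ) + 1) * ((((n : ℝ) + 1) ^ 2 * B) ^ k * C)) := by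
            positivity
          calc ((p + 1 : ℕ) : ℝ) * (B * (((n : ℝ) + 1) * ((((n : ℝ) + 1) ^ 2 * B) ^ k * C)))
              ≤ ((n : ℝ) + 1) * (B * (((n : ℝ) + 1) * ((((n : ℝ) + 1) ^ 2 * B) ^ k * C))) := by
                apply mul_le_mul_of_nonneg_right _ h1
                push_cast; linarith
            _ = (((n : ℝ) + 1) ^ 2 * B) ^ (k + 1) * C := by ring

lemma summable_iter {l f : PowerSeries ℂ} (hl0 : coeff (R := ℂ) 0 l = 0) (n : ℕ) :
    Summable fun k : ℕ => (k.factorial : ℂ)⁻¹ * coeff (R := ℂ) n ((vfAct l)^[k] f) := by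
  set B : ℝ := ∑ q ∈ Finset.range (n + 1), ‖coeff (R := ℂ) q l‖ with hBdef
  set C : ℝ := ∑ q ∈ Finset.range (n + 1), ‖coeff (R := ℂ) q f‖ with hCdef
  have hB : ∀ q ≤ n, ‖coeff (R := ℂ) q l‖ ≤ B := fun q hq =>
    Finset.single_le_sum (f := fun q => ‖coeff (R := ℂ) q l‖) (fun i _ => norm_nonneg _)
      (Finset.mem_range.mpr (Nat.lt_succ_of_le hq))
  have hC : ∀ q ≤ n, ‖coeff (R := ℂ) q f‖ ≤ C := fun q hq =>
    Finset.single_le_sum (f := fun q => ‖coeff (R := ℂ) q f‖) (fun i _ => norm_nonneg _)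
      (Finset.mem_range.mpr (Nat.lt_succ_of_le hq))
  have hC0 : 0 ≤ C := Finset.sum_nonneg fun i _ => norm_nonneg _
  have hbd := iter_bound hl0 hB hC0 hC
  apply Summable.of_norm_bounded
    (g := fun k : ℕ => ((((n : ℝ) + 1) ^ 2 * B) ^ k / k.factorial) * C)
    ((Real.summable_pow_div_factorial _).mul_right C)
  intro k
  rw [norm_mul, norm_inv, Complex.norm_natCast]
  calc ((k.factorial:ℝ))⁻¹ * ‖coeff (R := ℂ) n ((vfAct l)^[k] f)‖
      ≤ ((k.factorial:ℝ))⁻¹ * ((((n : ℝ) + 1) ^ 2 * B) ^ k * C) :=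
        mul_le_mul_of_nonneg_left (hbd k n le_rfl) (by positivity)
    _ = (((n : ℝ) + 1) ^ 2 * B) ^ k / ↑k.factorial * C := by
        rw [div_eq_mul_inv]; ring

lemma coeff_zero_iter {l f : PowerSeries ℂ} (hl0 : coeff (R := ℂ) 0 l = 0)
    (hf0 : coeff (R := ℂ) 0 f = 0) : ∀ k, coeff (R := ℂ) 0 ((vfAct l)^[k] f) = 0 := by
  intro k
  induction k with
  | zero => simpa using hf0
  | succ k ih =>
    rw [Function.iterate_succ_apply', coeff_vfAct]
    simp [hl0]

lemma coeff_one_iter {l : PowerSeries ℂ} (hl0 : coeff (R := ℂ) 0 l = 0) :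
    ∀ k, coeff (R := ℂ) 1 ((vfAct l)^[k] X) = (coeff (R := ℂ) 1 l) ^ k := by
  intro k
  induction k with
  | zero => simp
  | succ k ih =>
    rw [Function.iterate_succ_apply', coeff_vfAct]
    rw [show Finset.HasAntidiagonal.antidiagonal 1 = {(0,1),(1,0)} from rfl]
    rw [Finset.sum_insert (by decide), Finset.sum_singleton]
    simp only [hl0, zero_mul, zero_add]
    rw [ih]
    push_cast
    ring

noncomputable def dSeq (n : ℕ) (α : ℂ) : ℕ → ℂ
  | 0 => 0
  | (k+1) => (n : ℂ) * α * dSeq n α k + α ^ k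

noncomputable def cConst (n : ℕ) (α : ℂ) : ℂ := ∑' k : ℕ, (k.factorial : ℂ)⁻¹ * dSeq n α k

lemma dSeq_eq {n : ℕ} (hn : 2 ≤ n) (α : ℂ) (k : ℕ) :
    dSeq n α k = (((n : ℂ) ^ k - 1) / ((n : ℂ) - 1)) * α ^ (k - 1) := by
  have hn1 : (n : ℂ) - 1 ≠ 0 := by
    intro h
    have h1 : (n : ℂ) = 1 := by linear_combination h
    have : (n : ℕ) = 1 := by exact_mod_cast h1
    omega
  induction k with
  | zero => simp [dSeq]
  | succ k ih =>
    rw [dSeq, ih]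
    rcases Nat.eq_zero_or_pos k with rfl | hk
    · simp [dSeq]
      field_simp
    · have hα : α * α ^ (k - 1) = α ^ k := by
        rw [← pow_succ']; congr 1; omega
      have hk1 : (k + 1) - 1 = k := by omega
      rw [hk1,
        show (n:ℂ)*α*((((n:ℂ)^k-1)/((n:ℂ)-1))*α^(k-1))
          = ((n:ℂ)*((n:ℂ)^k-1)/((n:ℂ)-1))*(α*α^(k-1)) from by ring, hα]
      field_simp
      ring

lemma natCast_sub_one_ne {n : ℕ} (hn : 2 ≤ n) : (n : ℂ) - 1 ≠ 0 := by
  intro h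
  have h1 : (n : ℂ) = 1 := by linear_combination h
  have : (n : ℕ) = 1 := by exact_mod_cast h1
  omega

lemma iter_affine {l l' : PowerSeries ℂ} {n : ℕ} (hn : 2 ≤ n)
    (hl0 : coeff (R := ℂ) 0 l = 0) (hl0' : coeff (R := ℂ) 0 l' = 0)
    (hagree : ∀ q < n, coeff (R := ℂ) q l = coeff (R := ℂ) q l') :
    ∀ k, coeff (R := ℂ) n ((vfAct l)^[k] X) - coeff (R := ℂ) n ((vfAct l')^[k] X)
      = dSeq n (coeff (R := ℂ) 1 l) k * (coeff (R := ℂ) n l - coeff (R := ℂ) n l') := by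
  set α := coeff (R := ℂ) 1 l with hαdef
  have hα' : coeff (R := ℂ) 1 l' = α := (hagree 1 (by omega)).symm
  intro k
  induction k with
  | zero =>
    simp [dSeq, coeff_X, if_neg (by omega : ¬ n = 1)]
  | succ k ih =>
    rw [Function.iterate_succ_apply', Function.iterate_succ_apply', coeff_vfAct, coeff_vfAct,
      ← Finset.sum_sub_distrib]
    have hsub : ({(1, n-1), (n, 0)} : Finset (ℕ×ℕ)) ⊆ Finset.HasAntidiagonal.antidiagonal n := by
      intro ij hij
      simp only [Finset.mem_insert, Finset.mem_singleton] at hij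
      rcases hij with rfl | rfl <;> rw [Finset.HasAntidiagonal.mem_antidiagonal] <;> omega
    rw [← Finset.sum_subset hsub (by
      intro ij hij hnot
      rw [Finset.HasAntidiagonal.mem_antidiagonal] at hij
      simp only [Finset.mem_insert, Finset.mem_singleton] at hnot
      push_neg at hnot
      rcases Nat.eq_zero_or_pos ij.1 with h0 | h1
      · rw [h0, hl0, hl0']; ring
      · have hi_lt : ij.1 < n := by
          rcases Nat.lt_or_ge ij.1 n with h | h
          · exact h
          · exfalso
            exact hnot.2 (Prod.ext (by omega) (by omega))
        have hij2 : ij.2 + 1 ≤ n - 1 := by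
          rcases Nat.lt_or_ge 1 ij.1 with h | h
          · omega
          · exfalso
            exact hnot.1 (Prod.ext (by omega) (by omega))
        rw [hagree ij.1 hi_lt,
          iter_congr hl0 (n := n-1) (fun q hq => hagree q (by omega))
            (fun q _ => rfl) k (ij.2+1) hij2]
        ring)]
    rw [Finset.sum_insert (by
      simp only [Finset.mem_singleton, Prod.mk.injEq, not_and]
      intro h; omega), Finset.sum_singleton]
    have e2 : (n - 1) + 1 = n := by omega
    have e1 : (((n-1 : ℕ) : ℂ) + 1) = (n : ℂ) := by
      rw [Nat.cast_sub (by omega : 1 ≤ n)]; ring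
    rw [e2, e1, coeff_one_iter hl0 k, coeff_one_iter hl0' k, hα', ← hαdef, dSeq]
    push_cast
    linear_combination ((n : ℂ) * α) * ih

lemma cConst_ne_zero {n : ℕ} (hn : 2 ≤ n) (a : ℝ) : cConst n ((a : ℝ) : ℂ) ≠ 0 := by
  rcases eq_or_ne a 0 with rfl | ha
  · have h1 : cConst n ((0:ℝ) : ℂ) = 1 := by
      rw [cConst, tsum_eq_single 1 (by
        intro k hk
        match k with
        | 0 => simp [dSeq]
        | 1 => exact absurd rfl hk
        | (m+2) =>
          rw [dSeq_eq hn]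
          simp)]
      simp [dSeq]
    rw [h1]; exact one_ne_zero
  · have hn1 := natCast_sub_one_ne hn
    have hkey : ((n : ℂ) - 1) * (a : ℂ) * cConst n (a : ℂ)
        = Complex.exp ((n : ℂ) * a) - Complex.exp a := by
      rw [cConst, ← tsum_mul_left]
      have hpt : ∀ k : ℕ, ((n:ℂ)-1) * (a:ℂ) * ((k.factorial:ℂ)⁻¹ * dSeq n a k)
          = ((n:ℂ)*(a:ℂ))^k / k.factorial - (a:ℂ)^k / k.factorial := by
        intro k
        rw [dSeq_eq hn]
        rcases Nat.eq_zero_or_pos k with rfl | hk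
        · simp
        · obtain ⟨m, rfl⟩ : ∃ m, k = m + 1 := ⟨k - 1, by omega⟩
          simp only [Nat.add_sub_cancel, mul_pow]
          have hf : (((m+1).factorial : ℂ)) ≠ 0 :=
            Nat.cast_ne_zero.mpr (Nat.factorial_ne_zero _)
          rw [div_sub_div_same, eq_div_iff hf]
          have expand : ((n:ℂ) ^ (m+1) - 1) * (a:ℂ) ^ m / ((n:ℂ) - 1) * ((n:ℂ) - 1)
              = ((n:ℂ) ^ (m+1) - 1) * (a:ℂ) ^ m := div_mul_cancel₀ _ hn1
          have hfinv : ((m+1).factorial : ℂ)⁻¹ * ((m+1).factorial : ℂ) = 1 :=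
            inv_mul_cancel₀ hf
          have hfinv2 : ((m+1).factorial : ℂ) * ((m+1).factorial : ℂ)⁻¹ = 1 :=
            mul_inv_cancel₀ hf
          linear_combination ((a:ℂ) * ((m+1).factorial : ℂ)⁻¹ * ((m+1).factorial : ℂ)) * expand
            + ((n:ℂ)^(m+1) * (a:ℂ)^(m+1) - (a:ℂ)^(m+1) - ((n:ℂ)^(m+1) - 1) * (a:ℂ)^m * (a:ℂ)) * hfinv
            + ((n:ℂ)*(n:ℂ)^m*(a:ℂ)*(a:ℂ)^m - (a:ℂ)*(a:ℂ)^m) * hfinv2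
      rw [tsum_congr hpt,
        Summable.tsum_sub (NormedSpace.expSeries_div_summable ((n:ℂ)*(a:ℂ))) (NormedSpace.expSeries_div_summable (a:ℂ))]
      rw [Complex.exp_eq_exp_ℂ, NormedSpace.exp_eq_tsum_div]
    intro h0
    rw [h0, mul_zero] at hkey
    have hexp : Complex.exp ((n : ℂ) * a) = Complex.exp a := by
      linear_combination -hkey
    have hcast : ((n : ℂ) * a) = (((n : ℝ) * a : ℝ) : ℂ) := by push_cast; ring
    rw [hcast, ← Complex.ofReal_exp, ← Complex.ofReal_exp] at hexp
    have : Real.exp ((n : ℝ) * a) = Real.exp a := by exact_mod_cast hexp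
    have h2 : (n : ℝ) * a = a := Real.exp_injective this
    have hnn : (n : ℝ) ≠ 1 := by
      intro h; have : (n:ℕ) = 1 := by exact_mod_cast h
      omega
    apply ha
    have : ((n : ℝ) - 1) * a = 0 := by linarith
    rcases mul_eq_zero.mp this with h | h
    · exact absurd (by linarith : (n:ℝ) = 1) hnn
    · exact h

-- Part D starts here
lemma coeff_vfExp (l f : PowerSeries ℂ) (n : ℕ) :
    coeff (R := ℂ) n (vfExp l f) = ∑' k : ℕ, (k.factorial : ℂ)⁻¹ * coeff (R := ℂ) n ((vfAct l)^[k] f) :=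
  coeff_mk _ _

lemma coeff_zero_vfExp {l f : PowerSeries ℂ} (hl0 : coeff (R := ℂ) 0 l = 0)
    (hf0 : coeff (R := ℂ) 0 f = 0) : coeff (R := ℂ) 0 (vfExp l f) = 0 := by
  rw [coeff_vfExp]
  simp [coeff_zero_iter hl0 hf0]

lemma coeff_one_vfExp {l : PowerSeries ℂ} (hl0 : coeff (R := ℂ) 0 l = 0) :
    coeff (R := ℂ) 1 (vfExp l X) = Complex.exp (coeff (R := ℂ) 1 l) := by
  rw [coeff_vfExp]
  rw [Complex.exp_eq_exp_ℂ, NormedSpace.exp_eq_tsum_div]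
  exact tsum_congr fun k => by
    rw [coeff_one_iter hl0 k, div_eq_mul_inv, mul_comm]

lemma vfExp_congr {l l' : PowerSeries ℂ} {n : ℕ} (hl0 : coeff (R := ℂ) 0 l = 0)
    (hl : ∀ q ≤ n, coeff (R := ℂ) q l = coeff (R := ℂ) q l') :
    coeff (R := ℂ) n (vfExp l X) = coeff (R := ℂ) n (vfExp l' X) := by
  rw [coeff_vfExp, coeff_vfExp]
  exact tsum_congr fun k => by
    rw [iter_congr hl0 hl (fun q _ => rfl) k n le_rfl]

lemma vfExp_affine {l l' : PowerSeries ℂ} {n : ℕ} (hn : 2 ≤ n)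
    (hl0 : coeff (R := ℂ) 0 l = 0) (hl0' : coeff (R := ℂ) 0 l' = 0)
    (hagree : ∀ q < n, coeff (R := ℂ) q l = coeff (R := ℂ) q l') :
    coeff (R := ℂ) n (vfExp l X) - coeff (R := ℂ) n (vfExp l' X)
      = cConst n (coeff (R := ℂ) 1 l) * (coeff (R := ℂ) n l - coeff (R := ℂ) n l') := by
  rw [coeff_vfExp, coeff_vfExp,
    ← Summable.tsum_sub (summable_iter hl0 n) (summable_iter hl0' n)]
  have hpt : ∀ k : ℕ, (k.factorial : ℂ)⁻¹ * coeff (R := ℂ) n ((vfAct l)^[k] X)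
      - (k.factorial : ℂ)⁻¹ * coeff (R := ℂ) n ((vfAct l')^[k] X)
      = ((k.factorial : ℂ)⁻¹ * dSeq n (coeff (R := ℂ) 1 l) k) * (coeff (R := ℂ) n l - coeff (R := ℂ) n l') := by
    intro k
    rw [← mul_sub, iter_affine hn hl0 hl0' hagree k]
    ring
  rw [tsum_congr hpt, tsum_mul_right, cConst]

noncomputable def truncLt (c : ℕ → ℂ) (n : ℕ) : PowerSeries ℂ :=
  PowerSeries.mk fun m => if m < n then c m else 0

lemma coeff_truncLt (c : ℕ → ℂ) (n m : ℕ) :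
    coeff (R := ℂ) m (truncLt c n) = if m < n then c m else 0 := coeff_mk _ _

noncomputable def buildStep (h : PowerSeries ℂ) (p : ℕ → ℂ) (n : ℕ) : ℂ :=
  if n = 0 then 0
  else if n = 1 then ((Real.log ((coeff (R := ℂ) 1 h).re) : ℝ) : ℂ)
  else (coeff (R := ℂ) n h - coeff (R := ℂ) n (vfExp (truncLt p n) X)) /
    cConst n ((Real.log ((coeff (R := ℂ) 1 h).re) : ℝ) : ℂ)

noncomputable def buildFun (h : PowerSeries ℂ) : ℕ → (ℕ → ℂ)
  | 0 => fun _ => 0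
  | n+1 => fun m => if m = n then buildStep h (buildFun h n) n else buildFun h n m

noncomputable def buildC (h : PowerSeries ℂ) (n : ℕ) : ℂ := buildFun h (n+1) n

lemma buildFun_stable (h : PowerSeries ℂ) : ∀ k m, m < k → buildFun h k m = buildC h m := by
  intro k
  induction k with
  | zero => intro m hm; omega
  | succ k ih =>
    intro m hm
    rcases Nat.lt_or_ge m k with h1 | h2
    · show (if m = k then _ else buildFun h k m) = _
      rw [if_neg (by omega), ih m h1]
    · have hmk : m = k := by omega
      subst hmk
      rfl

lemma truncLt_buildFun (h : PowerSeries ℂ) (n : ℕ) :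
    truncLt (buildFun h n) n = truncLt (buildC h) n := by
  apply PowerSeries.ext
  intro m
  rw [coeff_truncLt, coeff_truncLt]
  split
  · next hm => rw [buildFun_stable h n m hm]
  · rfl

lemma buildC_eq (h : PowerSeries ℂ) (n : ℕ) :
    buildC h n = buildStep h (buildC h) n := by
  have h1 : buildC h n = buildStep h (buildFun h n) n := by
    show (if n = n then _ else _) = _
    rw [if_pos rfl]
  rw [h1]
  unfold buildStep
  rw [truncLt_buildFun]

lemma buildC_zero (h : PowerSeries ℂ) : buildC h 0 = 0 := by
  rw [buildC_eq]; rfl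

lemma buildC_one (h : PowerSeries ℂ) :
    buildC h 1 = ((Real.log ((coeff (R := ℂ) 1 h).re) : ℝ) : ℂ) := by
  rw [buildC_eq]; rfl


end Aux

/-- The exponential map `exp : d → D`, `l ↦ exp(l)`, defined by
`exp(l)(f) = ∑_{k≥0} (1/k!) lᵏf` and recorded via the image `exp(l)(ξ)` of `ξ`, restricts
to a bijection from `d₊⁰ = {(αξ + α₁ξ² + ⋯) d/dξ : α ∈ ℝ}` onto
`D₊⁰ = {h : h(ξ) = aξ + a₁ξ² + ⋯, a > 0}`. -/
theorem exp_bijOn_dPlusZero :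
    Set.BijOn (fun l : PowerSeries ℂ => vfExp l PowerSeries.X) dPlusZero DPlusZero := by
  refine ⟨?maps, ?inj, ?surj⟩
  case maps =>
    rintro l ⟨hl0, α, hα⟩
    refine ⟨coeff_zero_vfExp hl0 (by simp), Real.exp α, Real.exp_pos α, ?_⟩
    show coeff (R := ℂ) 1 (vfExp l X) = _
    rw [coeff_one_vfExp hl0, hα, ← Complex.ofReal_exp]
  case inj =>
    rintro l ⟨hl0, α, hα⟩ l' ⟨hl0', α', hα'⟩ heq
    have hco : ∀ n, coeff (R := ℂ) n (vfExp l X) = coeff (R := ℂ) n (vfExp l' X) := by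
      intro n
      have : vfExp l X = vfExp l' X := heq
      rw [this]
    have h1 : α = α' := by
      have h2 := hco 1
      rw [coeff_one_vfExp hl0, coeff_one_vfExp hl0', hα, hα',
        ← Complex.ofReal_exp, ← Complex.ofReal_exp] at h2
      exact Real.exp_injective (by exact_mod_cast h2)
    apply PowerSeries.ext
    intro n
    induction n using Nat.strong_induction_on with
    | _ n ih =>
      match n, ih with
      | 0, _ => rw [hl0, hl0']
      | 1, _ => rw [hα, hα', h1]
      | (m+2), ih =>
        have haff := vfExp_affine (by omega : 2 ≤ m + 2) hl0 hl0'
          (fun q hq => ih q hq)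
        rw [hco (m+2), sub_self] at haff
        have hc : cConst (m+2) (coeff (R := ℂ) 1 l) ≠ 0 := by
          rw [hα]; exact cConst_ne_zero (by omega) α
        have h3 := (mul_eq_zero.mp haff.symm).resolve_left hc
        exact sub_eq_zero.mp h3
  case surj =>
    rintro h ⟨hh0, a, ha, hha⟩
    set α : ℝ := Real.log ((coeff (R := ℂ) 1 h).re) with hαdef
    have hre : (coeff (R := ℂ) 1 h).re = a := by rw [hha]; simp
    set l : PowerSeries ℂ := PowerSeries.mk (buildC h) with hldef
    have hcl : ∀ m, coeff (R := ℂ) m l = buildC h m := fun m => coeff_mk _ _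
    have hl0 : coeff (R := ℂ) 0 l = 0 := by rw [hcl, buildC_zero]
    have hl1 : coeff (R := ℂ) 1 l = ((α : ℝ) : ℂ) := by rw [hcl, buildC_one]
    refine ⟨l, ⟨hl0, α, hl1⟩, ?_⟩
    show vfExp l X = h
    apply PowerSeries.ext
    intro n
    match n with
    | 0 => rw [coeff_zero_vfExp hl0 (by simp), hh0]
    | 1 =>
      rw [coeff_one_vfExp hl0, hl1, ← Complex.ofReal_exp, hαdef, hre, Real.exp_log ha, hha]
    | (m+2) =>
      set n : ℕ := m + 2 with hndef
      have hn : 2 ≤ n := by omega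
      set T' : PowerSeries ℂ := truncLt (buildC h) (n+1) with hT'def
      set T : PowerSeries ℂ := truncLt (buildC h) n with hTdef
      have hcT' : ∀ q, coeff (R := ℂ) q T' = if q < n + 1 then buildC h q else 0 :=
        fun q => coeff_truncLt _ _ _
      have hcT : ∀ q, coeff (R := ℂ) q T = if q < n then buildC h q else 0 :=
        fun q => coeff_truncLt _ _ _
      have hT'0 : coeff (R := ℂ) 0 T' = 0 := by rw [hcT', if_pos (by omega), buildC_zero]
      have hT0 : coeff (R := ℂ) 0 T = 0 := by rw [hcT, if_pos (by omega), buildC_zero]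
      have hstep1 : coeff (R := ℂ) n (vfExp l X) = coeff (R := ℂ) n (vfExp T' X) := by
        apply vfExp_congr hl0
        intro q hq
        rw [hcl, hcT', if_pos (by omega)]
      have hT'1 : coeff (R := ℂ) 1 T' = ((α : ℝ) : ℂ) := by
        rw [hcT', if_pos (by omega), buildC_one]
      have haff := vfExp_affine hn hT'0 hT0 (fun q hq => by
        rw [hcT', hcT, if_pos (by omega), if_pos hq])
      rw [hT'1] at haff
      have hcoefs : coeff (R := ℂ) n T' - coeff (R := ℂ) n T = buildC h n := by
        rw [hcT', hcT, if_pos (by omega), if_neg (by omega), sub_zero]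
      rw [hcoefs] at haff
      have hcne : cConst n ((α : ℝ) : ℂ) ≠ 0 := cConst_ne_zero hn α
      have hbuild : buildC h n
          = (coeff (R := ℂ) n h - coeff (R := ℂ) n (vfExp T X)) / cConst n ((α : ℝ) : ℂ) := by
        rw [buildC_eq]
        unfold buildStep
        rw [if_neg (by omega), if_neg (by omega), ← hαdef, ← hTdef]
      rw [hbuild, div_eq_mul_inv] at haff
      have : coeff (R := ℂ) n (vfExp T' X) = coeff (R := ℂ) n h := by
        have h4 : cConst n ((α : ℝ) : ℂ) *
            ((coeff (R := ℂ) n h - coeff (R := ℂ) n (vfExp T X)) * (cConst n ((α : ℝ) : ℂ))⁻¹)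
            = coeff (R := ℂ) n h - coeff (R := ℂ) n (vfExp T X) := by
          rw [mul_comm (coeff (R := ℂ) n h - coeff (R := ℂ) n (vfExp T X)), ← mul_assoc,
            mul_inv_cancel₀ hcne, one_mul]
        rw [h4] at haff
        linear_combination haff
      rw [hstep1, this]
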